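/- For any set E ⊆ ℝⁿ, the set of vertices of E is countable, where a point p is a vertex of E if p ∈ E and there exist a nonzero vector v ∈ ℝⁿ and an angle θ ∈ (0, π/2) such that E ⊆ C(p, v, θ). -/

import Mathlib

open Set Real
open scoped RealInnerProductSpace

/-- For any set `E ⊆ ℝⁿ`, the set of vertices of `E` is countable, where `p` is a vertex of `E`
if `p ∈ E` and `E` is contained in a closed cone with vertex `p`, axis `v ≠ 0`, and opening
angle `θ ∈ (0, π/2)`. -/
theorem countable_vertices {n : ℕ} (E : Set (EuclideanSpace ℝ (Fin n))) :
    {p : EuclideanSpace ℝ (Fin n) | p ∈ E ∧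
      ∃ v : EuclideanSpace ℝ (Fin n), v ≠ 0 ∧ ∃ θ ∈ Ioo (0 : ℝ) (π / 2),
        ∀ x ∈ E, Real.cos θ * (‖x - p‖ * ‖v‖) ≤ ⟪x - p, v⟫}.Countable := by
  obtain ⟨D, hDc, hDd⟩ := TopologicalSpace.exists_countable_dense (EuclideanSpace ℝ (Fin n))
  set S := {p : EuclideanSpace ℝ (Fin n) | p ∈ E ∧
      ∃ v : EuclideanSpace ℝ (Fin n), v ≠ 0 ∧ ∃ θ ∈ Ioo (0 : ℝ) (π / 2),
        ∀ x ∈ E, Real.cos θ * (‖x - p‖ * ‖v‖) ≤ ⟪x - p, v⟫} with hSdef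
  have key : ∀ p ∈ S, ∃ c : ℚ, 0 < c ∧ ∃ d ∈ D,
      ∀ x ∈ E, (c : ℝ) * ‖x - p‖ ≤ ⟪x - p, d⟫ := by
    rintro p ⟨hpE, v, hv, θ, hθ, hcone⟩
    have hv' : (0 : ℝ) < ‖v‖ := norm_pos_iff.mpr hv
    set u : EuclideanSpace ℝ (Fin n) := ‖v‖⁻¹ • v with hu
    have hcos : 0 < Real.cos θ :=
      Real.cos_pos_of_mem_Ioo ⟨by linarith [hθ.1, Real.pi_pos], hθ.2⟩
    obtain ⟨c, hc0, hc2⟩ := exists_rat_btwn (show (0 : ℝ) < Real.cos θ / 2 by linarith)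
    have hc0' : (0 : ℚ) < c := by exact_mod_cast hc0
    obtain ⟨d, hdD, hdu⟩ := hDd.exists_mem_open Metric.isOpen_ball
      (⟨u, by simpa [Metric.mem_ball] using hc0⟩ : (Metric.ball u (c : ℝ)).Nonempty)
    refine ⟨c, hc0', d, hdD, fun x hx => ?_⟩
    have h1 : Real.cos θ * ‖x - p‖ ≤ ⟪x - p, u⟫ := by
      have := hcone x hx
      have h2 : ⟪x - p, u⟫ = ‖v‖⁻¹ * ⟪x - p, v⟫ := real_inner_smul_right _ _ _
      rw [h2]
      calc Real.cos θ * ‖x - p‖ = Real.cos θ * (‖x - p‖ * ‖v‖) / ‖v‖ := by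
            field_simp
        _ ≤ inner ℝ (x - p) v / ‖v‖ := (div_le_div_iff_of_pos_right hv').mpr (hcone x hx)
        _ = ‖v‖⁻¹ * ⟪x - p, v⟫ := by rw [div_eq_inv_mul]
    have h2 : ⟪x - p, u⟫ - ⟪x - p, d⟫ ≤ ‖x - p‖ * c := by
      have : ⟪x - p, u⟫ - ⟪x - p, d⟫ = ⟪x - p, u - d⟫ := by
        rw [inner_sub_right]
      rw [this]
      have hud : ‖u - d‖ < (c : ℝ) := by
        rw [Metric.mem_ball, dist_eq_norm] at hdu
        rw [show u - d = -(d - u) by abel, norm_neg]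
        exact hdu
      calc ⟪x - p, u - d⟫ ≤ ‖x - p‖ * ‖u - d‖ := real_inner_le_norm _ _
        _ ≤ ‖x - p‖ * c := by
            exact mul_le_mul_of_nonneg_left hud.le (norm_nonneg _)
    have hr : (0 : ℝ) ≤ ‖x - p‖ := norm_nonneg _
    nlinarith [mul_nonneg (show (0:ℝ) ≤ Real.cos θ - 2 * c by linarith) hr]
  choose! c hc0 d hdD hP using key
  rw [← Set.countable_coe_iff]
  haveI := hDc.to_subtype
  have : Function.Injective (fun p : S => ((c p, ⟨d p, hdD p p.2⟩) : ℚ × D)) := by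
    rintro ⟨p, hp⟩ ⟨q, hq⟩ hpq
    simp only [Prod.mk.injEq, Subtype.mk.injEq] at hpq
    obtain ⟨hcpq, hdpq⟩ := hpq
    have h1 := hP p hp q hq.1
    have h2 := hP q hq p hp.1
    rw [hcpq, hdpq] at h1
    have h3 : ⟪p - q, d q⟫ = -⟪q - p, d q⟫ := by
      rw [show p - q = -(q - p) by abel, inner_neg_left]
    rw [h3] at h2
    have h4 : ‖p - q‖ = ‖q - p‖ := norm_sub_rev _ _
    rw [h4] at h2
    have hc : (0 : ℝ) < c q := by exact_mod_cast hc0 q hq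
    have : ‖q - p‖ ≤ 0 := by nlinarith [norm_nonneg (q - p)]
    have : q - p = 0 := by
      rw [← norm_le_zero_iff]; exact this
    ext
    have hqp : q = p := by
      have := sub_eq_zero.mp this; exact this
    simp [hqp]
  exact this.countable
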